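/- Assume Vtilde_{J-1} = Vtilde_J = V_inf. Then for all mesh functions PsiT, PsiB, W : {0,...,J} x {0,...,K} -> C with W_{0,k} = 0 for all k, writing D = (PsiT - PsiB)/tau and S = (PsiT + PsiB)/2, the following summation-by-parts identity holds: (i*hbar*s_N D + c_h*Delta_{hN} S - s_N(Vtilde.S), W)_{omega_h} - ((D_xh(PsiT,PsiB))_J, W_J)_{omega_hy} = (i*hbar*D - Vtilde.S, W)_{omegaT_h, s_N} - c_h*(s_{Ny} dbar_x S, dbar_x W)_{omegaT_h} + c_h*(d_y dbar_y S, W)_{omegaT_h, s_{Nx}}. -/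

import Mathlib

noncomputable section

/-- Backward difference quotient in `x`: `(∂̄_x W)_{j,k} = (W_{j,k} - W_{j-1,k})/h_x`. -/
def dbx (hx : ℝ) (W : ℕ → ℕ → ℂ) : ℕ → ℕ → ℂ := fun j k => (W j k - W (j - 1) k) / (hx : ℂ)

/-- Second difference quotient in `x`. -/
def ddxF (hx : ℝ) (W : ℕ → ℕ → ℂ) : ℕ → ℕ → ℂ := fun j k =>
  (W (j + 1) k - 2 * W j k + W (j - 1) k) / (hx : ℂ) ^ 2

/-- Second difference quotient in `y`. -/
def ddyF (hy : ℝ) (W : ℕ → ℕ → ℂ) : ℕ → ℕ → ℂ := fun j k =>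
  (W j (k + 1) - 2 * W j k + W j (k - 1)) / (hy : ℂ) ^ 2

/-- `s_{Nx} = I + (h_x²/12) ∂_x ∂̄_x`. -/
def sNxF (hx : ℝ) (W : ℕ → ℕ → ℂ) : ℕ → ℕ → ℂ := fun j k =>
  W j k + ((hx ^ 2 / 12 : ℝ) : ℂ) * ddxF hx W j k

/-- `s_{Ny} = I + (h_y²/12) ∂_y ∂̄_y`. -/
def sNyF (hy : ℝ) (W : ℕ → ℕ → ℂ) : ℕ → ℕ → ℂ := fun j k =>
  W j k + ((hy ^ 2 / 12 : ℝ) : ℂ) * ddyF hy W j k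

/-- `s_N = I + (h_x²/12) ∂_x ∂̄_x + (h_y²/12) ∂_y ∂̄_y`. -/
def sNF (hx hy : ℝ) (W : ℕ → ℕ → ℂ) : ℕ → ℕ → ℂ := fun j k =>
  W j k + ((hx ^ 2 / 12 : ℝ) : ℂ) * ddxF hx W j k + ((hy ^ 2 / 12 : ℝ) : ℂ) * ddyF hy W j k

/-- `Δ_{hN} = s_{Ny} ∂_x ∂̄_x + s_{Nx} ∂_y ∂̄_y`. -/
def dHNF (hx hy : ℝ) (W : ℕ → ℕ → ℂ) : ℕ → ℕ → ℂ := fun j k =>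
  sNyF hy (ddxF hx W) j k + sNxF hx (ddyF hy W) j k

/-- `(s_{Nx}^- W)_{j,k} = (1/12) W_{j-1,k} + (5/12) W_{j,k}`. -/
def sNxm (W : ℕ → ℕ → ℂ) : ℕ → ℕ → ℂ := fun j k =>
  (1 / 12 : ℂ) * W (j - 1) k + (5 / 12 : ℂ) * W j k

/-- `(s_N^- W)_{j,k} = (s_{Nx}^- W)_{j,k} + (h_y²/24)(∂_y ∂̄_y W)_{j,k}`. -/
def sNm (hy : ℝ) (W : ℕ → ℕ → ℂ) : ℕ → ℕ → ℂ := fun j k =>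
  sNxm W j k + ((hy ^ 2 / 24 : ℝ) : ℂ) * ddyF hy W j k

/-- `(U,W)_{ω_h} = ∑_{j=1}^{J-1} ∑_{k=1}^{K-1} U_{j,k} conj(W_{j,k}) h_x h_y`. -/
def innO (J K : ℕ) (hx hy : ℝ) (U W : ℕ → ℕ → ℂ) : ℂ :=
  ∑ j ∈ Finset.Icc 1 (J - 1), ∑ k ∈ Finset.Icc 1 (K - 1),
    U j k * (starRingEnd ℂ) (W j k) * ((hx * hy : ℝ) : ℂ)

/-- `(U,W)_{ω̃_h} = ∑_{j=1}^{J} ∑_{k=1}^{K-1} U_{j,k} conj(W_{j,k}) h_x h_y`. -/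
def innT (J K : ℕ) (hx hy : ℝ) (U W : ℕ → ℕ → ℂ) : ℂ :=
  ∑ j ∈ Finset.Icc 1 J, ∑ k ∈ Finset.Icc 1 (K - 1),
    U j k * (starRingEnd ℂ) (W j k) * ((hx * hy : ℝ) : ℂ)

/-- `(Z,Z')_{ω_{hy}} = ∑_{k=1}^{K-1} Z_k conj(Z'_k) h_y`. -/
def innY (K : ℕ) (hy : ℝ) (Z Z' : ℕ → ℂ) : ℂ :=
  ∑ k ∈ Finset.Icc 1 (K - 1), Z k * (starRingEnd ℂ) (Z' k) * ((hy : ℝ) : ℂ)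

/-- `(U,W)_{ω̃_h, s_N} = (s_N U, W)_{ω_h} + ((s_N^- U)_J, W_J)_{ω_{hy}} h_x`. -/
def innSN (J K : ℕ) (hx hy : ℝ) (U W : ℕ → ℕ → ℂ) : ℂ :=
  innO J K hx hy (sNF hx hy U) W
    + innY K hy (fun k => sNm hy U J k) (fun k => W J k) * ((hx : ℝ) : ℂ)

/-- `(U,W)_{ω̃_h, s_{Nx}} = (s_{Nx} U, W)_{ω_h} + ((s_{Nx}^- U)_J, W_J)_{ω_{hy}} h_x`. -/
def innSNx (J K : ℕ) (hx hy : ℝ) (U W : ℕ → ℕ → ℂ) : ℂ :=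
  innO J K hx hy (sNxF hx U) W
    + innY K hy (fun k => sNxm U J k) (fun k => W J k) * ((hx : ℝ) : ℂ)

private lemma split_top' (n : ℕ) (hn : 1 ≤ n) (f : ℕ → ℂ) :
    ∑ j ∈ Finset.Icc 1 n, f j = (∑ j ∈ Finset.Icc 1 (n - 1), f j) + f n := by
  obtain ⟨m, rfl⟩ := Nat.exists_eq_add_of_le hn
  simp only [Nat.add_sub_cancel_left, Nat.add_comm 1 m]
  exact Finset.sum_Icc_succ_top (by omega) f

private lemma tele' (J : ℕ) (hJ : 1 ≤ J) (G w : ℕ → ℂ) (h0 : w 0 = 0) :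
    ∑ j ∈ Finset.Icc 1 (J - 1), (G (j + 1) - G j) * w j
      = G J * w J - ∑ j ∈ Finset.Icc 1 J, G j * (w j - w (j - 1)) := by
  induction J with
  | zero => omega
  | succ n ih =>
    rcases Nat.eq_or_lt_of_le hJ with h | h
    · simp [← h, h0]
    · have hn : 1 ≤ n := by omega
      have e1 : n + 1 - 1 = n := rfl
      rw [e1, split_top' n hn, ih hn, split_top' (n + 1) (by omega)]
      rw [e1, split_top' n hn (fun j => G j * (w j - w (j - 1)))]
      ring

private lemma xcomm' (hx hy : ℝ) (hx0 : (hx : ℂ) ≠ 0) (hy0 : (hy : ℂ) ≠ 0)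
    (S : ℕ → ℕ → ℂ) (j k : ℕ) :
    sNyF hy (ddxF hx S) j k
      = (sNyF hy (dbx hx S) (j + 1) k - sNyF hy (dbx hx S) j k) / (hx : ℂ) := by
  simp only [sNyF, ddxF, ddyF, dbx, Nat.add_sub_cancel]
  push_cast
  field_simp
  ring

private lemma cancel1' (hx hy : ℝ) (hx0 : (hx : ℂ) ≠ 0) (a c : ℂ) :
    (a / (hx : ℂ)) * c * ((hx * hy : ℝ) : ℂ) = a * c * ((hy : ℝ) : ℂ) := by
  push_cast; field_simp

private lemma cancel2' (hx hy : ℝ) (hx0 : (hx : ℂ) ≠ 0) (a b : ℂ) :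
    a * (b / (hx : ℂ)) * ((hx * hy : ℝ) : ℂ) = a * b * ((hy : ℝ) : ℂ) := by
  push_cast; field_simp

/-- the summation-by-parts identity coupling the main equation's operators
and the boundary operator `D_{xh}` at `j = J`, for any mesh functions `Ψ̃ = PsiT`,
`Ψ̆ = PsiB` and any `W` vanishing at `j = 0`, with `D = (Ψ̃-Ψ̆)/τ`, `S = (Ψ̃+Ψ̆)/2`. -/
theorem stmt14 (J K : ℕ) (hJ : 2 ≤ J) (hK : 2 ≤ K)
    (hx hy hbar ch tau Vinf : ℝ)
    (hhx : 0 < hx) (hhy : 0 < hy) (hhbar : 0 < hbar) (hch : 0 < ch) (htau : 0 < tau)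
    (Vt : ℕ → ℝ) (hV1 : Vt (J - 1) = Vinf) (hV2 : Vt J = Vinf)
    (PsiT PsiB W : ℕ → ℕ → ℂ) (hW0 : ∀ k, W 0 k = 0) :
    let D : ℕ → ℕ → ℂ := fun j k => (PsiT j k - PsiB j k) / ((tau : ℝ) : ℂ)
    let S : ℕ → ℕ → ℂ := fun j k => (PsiT j k + PsiB j k) / 2
    let Dxh : ℕ → ℂ := fun k =>
      (ch : ℂ) * sNyF hy (dbx hx S) J k
        - (hx : ℂ) * sNm hy
            (fun j' k' => Complex.I * (hbar : ℂ) * D j' k' - (Vinf : ℂ) * S j' k') J k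
        - (hx : ℂ) * (ch : ℂ) * sNxm (ddyF hy S) J k
    innO J K hx hy
        (fun j k => Complex.I * (hbar : ℂ) * sNF hx hy D j k
          + (ch : ℂ) * dHNF hx hy S j k
          - sNF hx hy (fun j' k' => (Vt j' : ℂ) * S j' k') j k) W
      - innY K hy Dxh (fun k => W J k)
    = innSN J K hx hy
        (fun j k => Complex.I * (hbar : ℂ) * D j k - (Vt j : ℂ) * S j k) W
      - (ch : ℂ) * innT J K hx hy (sNyF hy (dbx hx S)) (dbx hx W)
      + (ch : ℂ) * innSNx J K hx hy (ddyF hy S) W := by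
  intro D S Dxh
  have hx0 : (hx : ℂ) ≠ 0 := Complex.ofReal_ne_zero.mpr hhx.ne'
  have hy0 : (hy : ℂ) ≠ 0 := Complex.ofReal_ne_zero.mpr hhy.ne'
  simp only [innSN, innSNx, innO, innT, innY, Dxh]
  -- pointwise splitting of the main-equation integrand
  have h1 : ∑ j ∈ Finset.Icc 1 (J - 1), ∑ k ∈ Finset.Icc 1 (K - 1),
        (Complex.I * (hbar : ℂ) * sNF hx hy D j k + (ch : ℂ) * dHNF hx hy S j k -
            sNF hx hy (fun j' k' => ((Vt j' : ℝ) : ℂ) * S j' k') j k) *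
          (starRingEnd ℂ) (W j k) * ((hx * hy : ℝ) : ℂ)
      = (∑ j ∈ Finset.Icc 1 (J - 1), ∑ k ∈ Finset.Icc 1 (K - 1),
            sNF hx hy (fun j' k' => Complex.I * (hbar : ℂ) * D j' k' - ((Vt j' : ℝ) : ℂ) * S j' k') j k *
              (starRingEnd ℂ) (W j k) * ((hx * hy : ℝ) : ℂ))
        + (ch : ℂ) * (∑ j ∈ Finset.Icc 1 (J - 1), ∑ k ∈ Finset.Icc 1 (K - 1),
            ((sNyF hy (dbx hx S) (j + 1) k - sNyF hy (dbx hx S) j k) / (hx : ℂ)) *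
              (starRingEnd ℂ) (W j k) * ((hx * hy : ℝ) : ℂ))
        + (ch : ℂ) * (∑ j ∈ Finset.Icc 1 (J - 1), ∑ k ∈ Finset.Icc 1 (K - 1),
            sNxF hx (ddyF hy S) j k * (starRingEnd ℂ) (W j k) * ((hx * hy : ℝ) : ℂ)) := by
    rw [Finset.mul_sum, Finset.mul_sum, ← Finset.sum_add_distrib, ← Finset.sum_add_distrib]
    refine Finset.sum_congr rfl fun j _ => ?_
    rw [Finset.mul_sum, Finset.mul_sum, ← Finset.sum_add_distrib, ← Finset.sum_add_distrib]
    refine Finset.sum_congr rfl fun k _ => ?_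
    simp only [dHNF]
    rw [xcomm' hx hy hx0 hy0 S j k]
    simp only [sNF, ddxF, ddyF]
    ring
  rw [h1]
  -- the boundary term
  have h2 : ∑ k ∈ Finset.Icc 1 (K - 1),
        ((ch : ℂ) * sNyF hy (dbx hx S) J k -
            (hx : ℂ) * sNm hy (fun j' k' => Complex.I * (hbar : ℂ) * D j' k' - ((Vinf : ℝ) : ℂ) * S j' k') J k -
            (hx : ℂ) * (ch : ℂ) * sNxm (ddyF hy S) J k) *
          (starRingEnd ℂ) (W J k) * ((hy : ℝ) : ℂ)
      = (ch : ℂ) * (∑ k ∈ Finset.Icc 1 (K - 1),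
            sNyF hy (dbx hx S) J k * (starRingEnd ℂ) (W J k) * ((hy : ℝ) : ℂ))
        - (hx : ℂ) * (∑ k ∈ Finset.Icc 1 (K - 1),
            sNm hy (fun j' k' => Complex.I * (hbar : ℂ) * D j' k' - ((Vt j' : ℝ) : ℂ) * S j' k') J k *
              (starRingEnd ℂ) (W J k) * ((hy : ℝ) : ℂ))
        - (hx : ℂ) * (ch : ℂ) * (∑ k ∈ Finset.Icc 1 (K - 1),
            sNxm (ddyF hy S) J k * (starRingEnd ℂ) (W J k) * ((hy : ℝ) : ℂ)) := by
    rw [Finset.mul_sum, Finset.mul_sum, Finset.mul_sum, ← Finset.sum_sub_distrib,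
      ← Finset.sum_sub_distrib]
    refine Finset.sum_congr rfl fun k _ => ?_
    have hf2 : sNm hy (fun j' k' => Complex.I * (hbar : ℂ) * D j' k' - ((Vinf : ℝ) : ℂ) * S j' k') J k
        = sNm hy (fun j' k' => Complex.I * (hbar : ℂ) * D j' k' - ((Vt j' : ℝ) : ℂ) * S j' k') J k := by
      simp only [sNm, sNxm, ddyF, hV1, hV2]
    rw [hf2]
    ring
  rw [h2]
  -- rewrite the innT term, conjugating the backward difference
  have h3 : ∑ j ∈ Finset.Icc 1 J, ∑ k ∈ Finset.Icc 1 (K - 1),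
        sNyF hy (dbx hx S) j k * (starRingEnd ℂ) (dbx hx W j k) * ((hx * hy : ℝ) : ℂ)
      = ∑ k ∈ Finset.Icc 1 (K - 1), ∑ j ∈ Finset.Icc 1 J,
          sNyF hy (dbx hx S) j k *
            (((starRingEnd ℂ) (W j k) - (starRingEnd ℂ) (W (j - 1) k)) / (hx : ℂ)) *
              ((hx * hy : ℝ) : ℂ) := by
    rw [Finset.sum_comm]
    refine Finset.sum_congr rfl fun k _ => Finset.sum_congr rfl fun j _ => ?_
    simp only [dbx, map_div₀, map_sub, Complex.conj_ofReal]
  rw [h3]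
  -- summation by parts in x
  have h4 : ∑ j ∈ Finset.Icc 1 (J - 1), ∑ k ∈ Finset.Icc 1 (K - 1),
        ((sNyF hy (dbx hx S) (j + 1) k - sNyF hy (dbx hx S) j k) / (hx : ℂ)) *
          (starRingEnd ℂ) (W j k) * ((hx * hy : ℝ) : ℂ)
      = (∑ k ∈ Finset.Icc 1 (K - 1),
            sNyF hy (dbx hx S) J k * (starRingEnd ℂ) (W J k) * ((hy : ℝ) : ℂ))
        - ∑ k ∈ Finset.Icc 1 (K - 1), ∑ j ∈ Finset.Icc 1 J,
            sNyF hy (dbx hx S) j k *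
              (((starRingEnd ℂ) (W j k) - (starRingEnd ℂ) (W (j - 1) k)) / (hx : ℂ)) *
                ((hx * hy : ℝ) : ℂ) := by
    rw [Finset.sum_comm, ← Finset.sum_sub_distrib]
    refine Finset.sum_congr rfl fun k _ => ?_
    rw [Finset.sum_congr rfl fun j (_ : j ∈ Finset.Icc 1 (J - 1)) =>
      cancel1' hx hy hx0 (sNyF hy (dbx hx S) (j + 1) k - sNyF hy (dbx hx S) j k)
        ((starRingEnd ℂ) (W j k))]
    rw [Finset.sum_congr rfl fun j (_ : j ∈ Finset.Icc 1 J) =>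
      cancel2' hx hy hx0 (sNyF hy (dbx hx S) j k)
        ((starRingEnd ℂ) (W j k) - (starRingEnd ℂ) (W (j - 1) k))]
    rw [← Finset.sum_mul, ← Finset.sum_mul,
      tele' J (by omega) (fun j => sNyF hy (dbx hx S) j k) (fun j => (starRingEnd ℂ) (W j k))
        (by simp [hW0])]
    ring
  rw [h4]
  ring
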